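/- Let b₁, b₂ be integers with b₁ ≥ 0 and b₁ ≥ b₂. Let α : ℂ[x₁,…,x₆] → ℂ[y₁^{±1}, y₂^{±1}, y₃^{±1}] be the ℂ-algebra homomorphism determined by α(x₁) = y₁, α(x₂) = y₂, α(x₃) = y₁y₂^{−1}, α(x₄) = y₁^{−b₁−1}y₂y₃, α(x₅) = y₁^{−b₂−1}y₂y₃, α(x₆) = y₃. Then the kernel of α equals the ideal generated by the three binomials x₁ − x₂x₃, x₂^{b₁} x₃^{b₁+1} x₄ − x₆, and x₂^{b₁−b₂} x₃^{b₁−b₂} x₄ − x₅. -/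

import Mathlib

open MvPolynomial

/-- The Laurent monomial `y₁^{v 0} y₂^{v 1} y₃^{v 2}` in the Laurent polynomial ring
`ℂ[y₁^{±1}, y₂^{±1}, y₃^{±1}]`, realized as `AddMonoidAlgebra ℂ (Fin 3 → ℤ)`. -/
noncomputable def laurentMonomial3 (v : Fin 3 → ℤ) : AddMonoidAlgebra ℂ (Fin 3 → ℤ) :=
  AddMonoidAlgebra.single v 1

lemma lm_mul (a b : Fin 3 → ℤ) :
    laurentMonomial3 a * laurentMonomial3 b = laurentMonomial3 (a + b) := by
  simp [laurentMonomial3, AddMonoidAlgebra.single_mul_single]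

lemma lm_pow (a : Fin 3 → ℤ) (n : ℕ) :
    laurentMonomial3 a ^ n = laurentMonomial3 (n • a) := by
  simp [laurentMonomial3, AddMonoidAlgebra.single_pow]

lemma lm_inj : Function.Injective laurentMonomial3 := by
  intro a b h
  rcases AddMonoidAlgebra.single_inj.mp h with ⟨h1, _⟩ | ⟨h1, _⟩
  · exact h1
  · exact absurd h1 one_ne_zero

def wvec (b₁ : ℤ) : Fin 3 → Fin 3 → ℤ := ![![0,1,0], ![1,-1,0], ![-(b₁+1),1,1]]

def Tmap (b₁ : ℤ) (e : Fin 3 →₀ ℕ) : Fin 3 → ℤ := ∑ i, e i • wvec b₁ i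

lemma Tmap_apply (b₁ : ℤ) (e : Fin 3 →₀ ℕ) :
    Tmap b₁ e = ![(e 1 : ℤ) - e 2 * (b₁+1), (e 0 : ℤ) - e 1 + e 2, (e 2 : ℤ)] := by
  funext j
  fin_cases j <;>
    simp [Tmap, wvec, Fin.sum_univ_three] <;> ring

lemma Tmap_inj (b₁ : ℤ) : Function.Injective (Tmap b₁) := by
  intro e e' h
  rw [Tmap_apply, Tmap_apply] at h
  have h0 := congrFun h 0
  have h1 := congrFun h 1
  have h2 := congrFun h 2
  simp at h0 h1 h2
  have h2' : e 2 = e' 2 := by exact_mod_cast h2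
  rw [h2'] at h0
  have h0' : e 1 = e' 1 := by omega
  have h1' : e 0 = e' 0 := by omega
  ext i
  fin_cases i <;> simp only [Fin.zero_eta, Fin.mk_one, Fin.reduceFinMk] <;> omega

noncomputable def βhom (b₁ : ℤ) : MvPolynomial (Fin 3) ℂ →ₐ[ℂ] AddMonoidAlgebra ℂ (Fin 3 → ℤ) :=
  aeval (fun i => laurentMonomial3 (wvec b₁ i))

lemma βhom_monomial (b₁ : ℤ) (e : Fin 3 →₀ ℕ) (c : ℂ) :
    βhom b₁ (monomial e c) = AddMonoidAlgebra.single (Tmap b₁ e) c := by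
  rw [βhom, aeval_monomial]
  rw [Finsupp.prod_fintype _ _ (fun i => pow_zero _)]
  rw [Fin.prod_univ_three]
  simp only [lm_pow, lm_mul]
  rw [AddMonoidAlgebra.coe_algebraMap]
  simp only [Function.comp_apply, Algebra.algebraMap_self, RingHom.id_apply]
  rw [laurentMonomial3, AddMonoidAlgebra.single_mul_single]
  rw [Tmap, Fin.sum_univ_three]
  simp

lemma βhom_eq_mapDomain (b₁ : ℤ) (g : MvPolynomial (Fin 3) ℂ) :
    βhom b₁ g = AddMonoidAlgebra.mapDomain (Tmap b₁) g := by
  induction g using MvPolynomial.induction_on' with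
  | monomial e c =>
      rw [βhom_monomial]
      rw [show (monomial e c : MvPolynomial (Fin 3) ℂ) = AddMonoidAlgebra.single e c from rfl]
      rw [AddMonoidAlgebra.mapDomain_single]
  | add p q hp hq =>
      rw [map_add, hp, hq, AddMonoidAlgebra.mapDomain_add]

lemma βhom_inj (b₁ : ℤ) : Function.Injective (βhom b₁) := by
  intro p q h
  rw [βhom_eq_mapDomain, βhom_eq_mapDomain] at h
  exact AddMonoidAlgebra.mapDomain_injective (Tmap_inj b₁) h

lemma lm_congr {a b : Fin 3 → ℤ} (h : a = b) : laurentMonomial3 a = laurentMonomial3 b := by rw [h]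

noncomputable def ιhom : MvPolynomial (Fin 3) ℂ →ₐ[ℂ] MvPolynomial (Fin 6) ℂ :=
  aeval ![X 1, X 2, X 3]

noncomputable def ψhom (b₁ b₂ : ℤ) : MvPolynomial (Fin 6) ℂ →ₐ[ℂ] MvPolynomial (Fin 3) ℂ :=
  aeval ![X 0 * X 1, X 0, X 1, X 2,
    X 0 ^ (b₁ - b₂).toNat * X 1 ^ (b₁ - b₂).toNat * X 2,
    X 0 ^ b₁.toNat * X 1 ^ (b₁ + 1).toNat * X 2]

theorem toric_ideal_case_3_1_4 (b₁ b₂ : ℤ) (hb₁ : 0 ≤ b₁) (hb₂ : b₂ ≤ b₁) :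
    RingHom.ker (MvPolynomial.aeval
        ![laurentMonomial3 ![1, 0, 0], laurentMonomial3 ![0, 1, 0],
          laurentMonomial3 ![1, -1, 0], laurentMonomial3 ![-(b₁ + 1), 1, 1],
          laurentMonomial3 ![-(b₂ + 1), 1, 1], laurentMonomial3 ![0, 0, 1]] :
      MvPolynomial (Fin 6) ℂ →ₐ[ℂ] AddMonoidAlgebra ℂ (Fin 3 → ℤ)) =
    Ideal.span {(X 0 - X 1 * X 2 : MvPolynomial (Fin 6) ℂ),
      X 1 ^ b₁.toNat * X 2 ^ (b₁ + 1).toNat * X 3 - X 5,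
      X 1 ^ (b₁ - b₂).toNat * X 2 ^ (b₁ - b₂).toNat * X 3 - X 4} := by
  set α : MvPolynomial (Fin 6) ℂ →ₐ[ℂ] AddMonoidAlgebra ℂ (Fin 3 → ℤ) :=
    MvPolynomial.aeval
      ![laurentMonomial3 ![1, 0, 0], laurentMonomial3 ![0, 1, 0],
        laurentMonomial3 ![1, -1, 0], laurentMonomial3 ![-(b₁ + 1), 1, 1],
        laurentMonomial3 ![-(b₂ + 1), 1, 1], laurentMonomial3 ![0, 0, 1]] with hα
  set I : Ideal (MvPolynomial (Fin 6) ℂ) :=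
    Ideal.span {(X 0 - X 1 * X 2 : MvPolynomial (Fin 6) ℂ),
      X 1 ^ b₁.toNat * X 2 ^ (b₁ + 1).toNat * X 3 - X 5,
      X 1 ^ (b₁ - b₂).toNat * X 2 ^ (b₁ - b₂).toNat * X 3 - X 4} with hI
  have hα0 : α (X 0) = laurentMonomial3 ![1, 0, 0] := by rw [hα, aeval_X]; rfl
  have hα1 : α (X 1) = laurentMonomial3 ![0, 1, 0] := by rw [hα, aeval_X]; rfl
  have hα2 : α (X 2) = laurentMonomial3 ![1, -1, 0] := by rw [hα, aeval_X]; rfl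
  have hα3 : α (X 3) = laurentMonomial3 ![-(b₁ + 1), 1, 1] := by rw [hα, aeval_X]; rfl
  have hα4 : α (X 4) = laurentMonomial3 ![-(b₂ + 1), 1, 1] := by rw [hα, aeval_X]; rfl
  have hα5 : α (X 5) = laurentMonomial3 ![0, 0, 1] := by rw [hα, aeval_X]; rfl
  have hψ0 : ψhom b₁ b₂ (X 0) = X 0 * X 1 := by rw [ψhom, aeval_X]; rfl
  have hψ1 : ψhom b₁ b₂ (X 1) = X 0 := by rw [ψhom, aeval_X]; rfl
  have hψ2 : ψhom b₁ b₂ (X 2) = X 1 := by rw [ψhom, aeval_X]; rfl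
  have hψ3 : ψhom b₁ b₂ (X 3) = X 2 := by rw [ψhom, aeval_X]; rfl
  have hψ4 : ψhom b₁ b₂ (X 4)
      = X 0 ^ (b₁ - b₂).toNat * X 1 ^ (b₁ - b₂).toNat * X 2 := by rw [ψhom, aeval_X]; rfl
  have hψ5 : ψhom b₁ b₂ (X 5)
      = X 0 ^ b₁.toNat * X 1 ^ (b₁ + 1).toNat * X 2 := by rw [ψhom, aeval_X]; rfl
  have hι0 : ιhom (X 0) = (X 1 : MvPolynomial (Fin 6) ℂ) := by rw [ιhom, aeval_X]; rfl
  have hι1 : ιhom (X 1) = (X 2 : MvPolynomial (Fin 6) ℂ) := by rw [ιhom, aeval_X]; rfl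
  have hι2 : ιhom (X 2) = (X 3 : MvPolynomial (Fin 6) ℂ) := by rw [ιhom, aeval_X]; rfl
  -- Easy direction: I ≤ ker α
  have hspan : I ≤ RingHom.ker α := by
    rw [hI, Ideal.span_le]
    rintro g (rfl | rfl | rfl) <;>
      simp only [SetLike.mem_coe, RingHom.mem_ker, map_sub, map_mul, map_pow,
        hα0, hα1, hα2, hα3, hα4, hα5, lm_pow, lm_mul] <;>
    · rw [sub_eq_zero]
      apply lm_congr
      funext j
      fin_cases j <;> simp <;> omega
  -- The substitution fixes every variable modulo I
  have hXi : ∀ i : Fin 6, (X i - ιhom (ψhom b₁ b₂ (X i)) : MvPolynomial (Fin 6) ℂ) ∈ I := by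
    intro i
    fin_cases i
    · show (X 0 - ιhom (ψhom b₁ b₂ (X 0)) : MvPolynomial (Fin 6) ℂ) ∈ I
      rw [hψ0, map_mul, hι0, hι1]
      exact Ideal.subset_span (Or.inl rfl)
    · show (X 1 - ιhom (ψhom b₁ b₂ (X 1)) : MvPolynomial (Fin 6) ℂ) ∈ I
      rw [hψ1, hι0, sub_self]; exact I.zero_mem
    · show (X 2 - ιhom (ψhom b₁ b₂ (X 2)) : MvPolynomial (Fin 6) ℂ) ∈ I
      rw [hψ2, hι1, sub_self]; exact I.zero_mem
    · show (X 3 - ιhom (ψhom b₁ b₂ (X 3)) : MvPolynomial (Fin 6) ℂ) ∈ I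
      rw [hψ3, hι2, sub_self]; exact I.zero_mem
    · show (X 4 - ιhom (ψhom b₁ b₂ (X 4)) : MvPolynomial (Fin 6) ℂ) ∈ I
      rw [hψ4, map_mul, map_mul, map_pow, map_pow, hι0, hι1, hι2]
      rw [show (X 4 - X 1 ^ (b₁ - b₂).toNat * X 2 ^ (b₁ - b₂).toNat * X 3
          : MvPolynomial (Fin 6) ℂ)
          = -(X 1 ^ (b₁ - b₂).toNat * X 2 ^ (b₁ - b₂).toNat * X 3 - X 4) by ring]
      exact I.neg_mem (Ideal.subset_span (Or.inr (Or.inr rfl)))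
    · show (X 5 - ιhom (ψhom b₁ b₂ (X 5)) : MvPolynomial (Fin 6) ℂ) ∈ I
      rw [hψ5, map_mul, map_mul, map_pow, map_pow, hι0, hι1, hι2]
      rw [show (X 5 - X 1 ^ b₁.toNat * X 2 ^ (b₁ + 1).toNat * X 3 : MvPolynomial (Fin 6) ℂ)
          = -(X 1 ^ b₁.toNat * X 2 ^ (b₁ + 1).toNat * X 3 - X 5) by ring]
      exact I.neg_mem (Ideal.subset_span (Or.inr (Or.inl rfl)))
  -- Every f is congruent mod I to its substitution
  have key : ∀ f : MvPolynomial (Fin 6) ℂ, f - ιhom (ψhom b₁ b₂ f) ∈ I := by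
    intro f
    induction f using MvPolynomial.induction_on with
    | C a => simp
    | add p q hp hq =>
        rw [map_add, map_add]
        have : p + q - (ιhom (ψhom b₁ b₂ p) + ιhom (ψhom b₁ b₂ q))
            = (p - ιhom (ψhom b₁ b₂ p)) + (q - ιhom (ψhom b₁ b₂ q)) := by ring
        rw [this]; exact I.add_mem hp hq
    | mul_X p i hp =>
        rw [map_mul, map_mul]
        have : p * X i - ιhom (ψhom b₁ b₂ p) * ιhom (ψhom b₁ b₂ (X i))
            = (p - ιhom (ψhom b₁ b₂ p)) * X i
              + ιhom (ψhom b₁ b₂ p) * (X i - ιhom (ψhom b₁ b₂ (X i))) := by ring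
        rw [this]
        exact I.add_mem (I.mul_mem_right _ hp) (I.mul_mem_left _ (hXi i))
  -- α ∘ ι = β
  have hcomm : α.comp ιhom = βhom b₁ := by
    apply MvPolynomial.algHom_ext
    intro i
    fin_cases i
    · show α (ιhom (X 0)) = βhom b₁ (X 0)
      rw [hι0, hα1, βhom, aeval_X]
      exact lm_congr (by funext j; fin_cases j <;> simp [wvec])
    · show α (ιhom (X 1)) = βhom b₁ (X 1)
      rw [hι1, hα2, βhom, aeval_X]
      exact lm_congr (by funext j; fin_cases j <;> simp [wvec])
    · show α (ιhom (X 2)) = βhom b₁ (X 2)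
      rw [hι2, hα3, βhom, aeval_X]
      exact lm_congr (by funext j; fin_cases j <;> simp [wvec])
  apply le_antisymm _ hspan
  intro f hf
  rw [RingHom.mem_ker] at hf
  have hk := key f
  have h0 : α (f - ιhom (ψhom b₁ b₂ f)) = 0 := hspan hk
  rw [map_sub, hf, zero_sub, neg_eq_zero] at h0
  have hβ : βhom b₁ (ψhom b₁ b₂ f) = 0 := by
    rw [← hcomm]; exact h0
  have hψ : ψhom b₁ b₂ f = 0 := βhom_inj b₁ (by rw [hβ, map_zero])
  rw [hψ, map_zero, sub_zero] at hk
  exact hk
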